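/- For the first-touch attribution rule, the user × publisher × advertiser adjacency relation with post-attribution contribution bound enforcement with bound r maps any two adjacent datasets (differing by all impressions of a single (user, publisher, advertiser) triple) to attributed datasets at ℓ1-distance at most 2r. -/

import Mathlib

/-! Framework for differentially private ad conversion measurement
(Delaney et al., "Differentially Private Ad Conversion Measurement"). -/

structure Impression where
  time : ℕ
  user : ℕ
  pub : ℕ
  adv : ℕ
  id : ℕ
deriving DecidableEq

structure Conversion where
  time : ℕ
  user : ℕ
  adv : ℕ
  id : ℕ
deriving DecidableEq

structure Dataset where
  imps : List Impression
  convs : List Conversion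

/-- An attribution rule maps a time-ordered list of impressions and a conversion
to a list of credits (one per impression). -/
abbrev AttrRule := List Impression → Conversion → List ℝ

/-- A valid attribution rule outputs one nonnegative weight per impression, summing to 1. -/
def ValidRule (a : AttrRule) : Prop :=
  ∀ is c, is ≠ [] →
    (a is c).length = is.length ∧ (a is c).sum = 1 ∧ ∀ w ∈ a is c, (0 : ℝ) ≤ w

/-- Impressions eligible for attribution of conversion `c`: those occurring earlier
with the same user and advertiser. -/
def eligible (D : Dataset) (c : Conversion) : List Impression :=
  D.imps.filter fun i => decide (i.time < c.time ∧ i.user = c.user ∧ i.adv = c.adv)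

/-- ℓ₁ distance between attributed datasets. -/
noncomputable def l1dist (w w' : (Impression × Conversion) →₀ ℝ) : ℝ :=
  (w - w').sum fun _ v => |v|

/-- Impressions and conversions are listed in time order. -/
def SortedDS (D : Dataset) : Prop :=
  D.imps.Pairwise (fun i j => i.time ≤ j.time) ∧
  D.convs.Pairwise (fun c c' => c.time ≤ c'.time)

/-- Inner loop of post-attribution contribution-bound enforcement: each weighted
(impression, conversion) pair is kept only if the remaining bound of its scope covers
the weight, in which case the weight is deducted. -/
noncomputable def applyPairs {σ : Type} [DecidableEq σ] (s : Impression → σ) (c : Conversion) :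
    List (Impression × ℝ) → (σ → ℝ) × ((Impression × Conversion) →₀ ℝ) →
      (σ → ℝ) × ((Impression × Conversion) →₀ ℝ)
  | [], st => st
  | (i, w) :: rest, st =>
      if w ≤ st.1 (s i) then
        applyPairs s c rest
          (Function.update st.1 (s i) (st.1 (s i) - w), st.2 + Finsupp.single (i, c) w)
      else
        applyPairs s c rest st

/-- Attribution with post-attribution contribution bound enforcement (Algorithm 1),
with contribution bounding scope map `s` and contribution bound `r`. -/
noncomputable def postAttr {σ : Type} [DecidableEq σ] (a : AttrRule) (s : Impression → σ)
    (r : ℝ) (D : Dataset) : (Impression × Conversion) →₀ ℝ :=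
  (D.convs.foldl
    (fun st c => applyPairs s c ((eligible D c).zip (a (eligible D c) c)) st)
    ((fun _ => r : σ → ℝ), (0 : (Impression × Conversion) →₀ ℝ))).2

/-- Attribution with pre-attribution contribution bound enforcement (Algorithm 2):
for each conversion, every scope with an eligible impression pays one unit of its bound
if available, otherwise its impressions are excluded from attribution. -/
noncomputable def preAttr {σ : Type} [DecidableEq σ] (a : AttrRule) (s : Impression → σ)
    (r : ℝ) (D : Dataset) : (Impression × Conversion) →₀ ℝ :=
  (D.convs.foldl
    (fun (st : (σ → ℝ) × ((Impression × Conversion) →₀ ℝ)) c =>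
      let el := eligible D c
      let surv := el.filter fun i => decide ((1 : ℝ) ≤ st.1 (s i))
      let scopes := (el.map s).dedup
      ((fun x => if x ∈ scopes ∧ (1 : ℝ) ≤ st.1 x then st.1 x - 1 else st.1 x : σ → ℝ),
        st.2 + ((surv.zip (a surv c)).map fun p => Finsupp.single (p.1, c) p.2).sum))
    ((fun _ => r : σ → ℝ), (0 : (Impression × Conversion) →₀ ℝ))).2

/-- Attribution without any contribution bound enforcement. -/
noncomputable def attrNoCap (a : AttrRule) (D : Dataset) :
    (Impression × Conversion) →₀ ℝ :=
  (D.convs.map fun c =>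
    (((eligible D c).zip (a (eligible D c) c)).map fun p => Finsupp.single (p.1, c) p.2).sum).sum

/-- Adjacency: `D'` results from `D` by adding a single impression (in time order). -/
def AddOneImpression (D D' : Dataset) : Prop :=
  ∃ (i0 : Impression) (l₁ l₂ : List Impression),
    D.imps = l₁ ++ l₂ ∧ D'.imps = l₁ ++ i0 :: l₂ ∧ D.convs = D'.convs

/-- Adjacency: `D` results from `D'` by removing all impressions whose scope (under `si`)
is `v` and all conversions whose scope (under `sc`) is `v`. -/
def RemovesScope {σ : Type} [DecidableEq σ] (si : Impression → σ)
    (sc : Conversion → Option σ) (v : σ) (D D' : Dataset) : Prop :=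
  D.imps = D'.imps.filter (fun i => decide (si i ≠ v)) ∧
  D.convs = D'.convs.filter (fun c => decide (sc c ≠ some v))

/-- First-touch attribution. -/
noncomputable def FTA : AttrRule := fun is _ =>
  match is with
  | [] => []
  | _ :: t => 1 :: t.map fun _ => 0

/-- Last-touch attribution. -/
noncomputable def LTA : AttrRule := fun is _ =>
  match is with
  | [] => []
  | _ :: _ => List.replicate (is.length - 1) 0 ++ [1]

/-- Uniform multi-touch attribution. -/
noncomputable def UNI : AttrRule := fun is _ => is.map fun _ => ((is.length : ℝ))⁻¹

/-- U-shaped attribution. -/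
noncomputable def USH : AttrRule := fun is _ =>
  match is with
  | [] => []
  | [_] => [1]
  | [_, _] => [0.5, 0.5]
  | _ :: _ :: _ :: _ =>
      (0.4 : ℝ) :: (List.replicate (is.length - 2) ((0.2 : ℝ) / ((is.length : ℝ) - 2)) ++ [0.4])

/-- Exponential time decay attribution with half-life `th`. -/
noncomputable def EXPR (th : ℝ) : AttrRule := fun is c =>
  let wt : Impression → ℝ := fun i => (2 : ℝ) ^ (-(((c.time : ℝ) - (i.time : ℝ)) / th))
  is.map fun i => wt i / (is.map wt).sum


namespace ThmA10

/-! ### ℓ¹-norm lemmas -/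

noncomputable def N (w : (Impression × Conversion) →₀ ℝ) : ℝ := w.sum fun _ x => |x|

lemma N_eq (w : (Impression × Conversion) →₀ ℝ) {S : Finset (Impression × Conversion)}
    (h : w.support ⊆ S) : N w = ∑ x ∈ S, |w x| :=
  Finsupp.sum_of_support_subset w h _ (fun _ _ => abs_zero)

lemma N_nonneg (w : (Impression × Conversion) →₀ ℝ) : 0 ≤ N w := by
  rw [N_eq w (Finset.Subset.refl _)]
  exact Finset.sum_nonneg fun _ _ => abs_nonneg _

lemma N_zero : N 0 = 0 := by simp [N]

lemma N_add_le (x y : (Impression × Conversion) →₀ ℝ) : N (x + y) ≤ N x + N y := by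
  classical
  rw [N_eq (x + y) (S := x.support ∪ y.support) Finsupp.support_add,
      N_eq x (S := x.support ∪ y.support) Finset.subset_union_left,
      N_eq y (S := x.support ∪ y.support) Finset.subset_union_right,
      ← Finset.sum_add_distrib]
  refine Finset.sum_le_sum fun i _ => ?_
  rw [Finsupp.add_apply]
  exact abs_add_le _ _

lemma N_neg (x : (Impression × Conversion) →₀ ℝ) : N (-x) = N x := by
  rw [N_eq (-x) (S := x.support) (by simp), N_eq x (Finset.Subset.refl _)]
  simp

lemma N_single (z : Impression × Conversion) (w : ℝ) : N (Finsupp.single z w) ≤ |w| := by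
  rw [N_eq _ (S := {z}) Finsupp.support_single_subset]
  simp

lemma N_key (x y X Y : (Impression × Conversion) →₀ ℝ) :
    N ((x + X) - (y + Y)) ≤ N (x - y) + N X + N Y := by
  have h : (x + X) - (y + Y) = ((x - y) + X) + -Y := by abel
  rw [h]
  calc N (((x - y) + X) + -Y) ≤ N ((x - y) + X) + N (-Y) := N_add_le _ _
    _ ≤ (N (x - y) + N X) + N Y := by rw [N_neg]; linarith [N_add_le (x - y) X]

/-! ### Simplification of the FTA post-attribution step -/

variable {σ : Type} [DecidableEq σ]

noncomputable def stepF (s : Impression → σ) (e : List Impression) (c : Conversion)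
    (st : (σ → ℝ) × ((Impression × Conversion) →₀ ℝ)) :
    (σ → ℝ) × ((Impression × Conversion) →₀ ℝ) :=
  match e with
  | [] => st
  | i :: _ =>
      if 1 ≤ st.1 (s i) then
        (Function.update st.1 (s i) (st.1 (s i) - 1), st.2 + Finsupp.single (i, c) 1)
      else st

lemma applyPairs_zeros (s : Impression → σ) (c : Conversion) :
    ∀ (l : List (Impression × ℝ)) st, (∀ x ∈ l, x.2 = (0 : ℝ)) → applyPairs s c l st = st := by
  intro l
  induction l with
  | nil => intro st _; rfl
  | cons hd t ih =>
      intro st h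
      obtain ⟨i, w⟩ := hd
      have hw : w = 0 := h (i, w) (List.mem_cons_self)
      subst hw
      rw [applyPairs]
      split_ifs with hb
      · have h1 : Function.update st.1 (s i) (st.1 (s i) - 0) = st.1 := by
          rw [sub_zero]; exact Function.update_eq_self _ _
        have h2 : st.2 + Finsupp.single (i, c) (0 : ℝ) = st.2 := by simp
        rw [h1, h2]
        exact ih st fun x hx => h x (List.mem_cons_of_mem _ hx)
      · exact ih st fun x hx => h x (List.mem_cons_of_mem _ hx)

lemma applyPairs_FTA (s : Impression → σ) (e : List Impression) (c : Conversion) (st) :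
    applyPairs s c (e.zip (FTA e c)) st = stepF s e c st := by
  cases e with
  | nil => rfl
  | cons i t =>
      show applyPairs s c ((i, 1) :: t.zip (t.map fun _ => (0 : ℝ))) st = _
      rw [applyPairs, stepF]
      have hzero : ∀ x ∈ t.zip (t.map fun _ => (0 : ℝ)), x.2 = (0 : ℝ) := by
        rintro ⟨a, b⟩ hx
        have hb := (List.of_mem_zip hx).2
        obtain ⟨j, -, hj⟩ := List.mem_map.mp hb
        exact hj.symm
      split_ifs with hb
      · rw [applyPairs_zeros s c _ _ hzero]
      · rw [applyPairs_zeros s c _ _ hzero]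

lemma postAttr_FTA (s : Impression → σ) (r : ℝ) (D : Dataset) :
    postAttr FTA s r D =
      (D.convs.foldl (fun st c => stepF s (eligible D c) c st)
        ((fun _ => r : σ → ℝ), 0)).2 := by
  simp only [postAttr, applyPairs_FTA]

lemma stepF_congr (s : Impression → σ) {e e' : List Impression} (c : Conversion) (st)
    (h : e.head? = e'.head?) : stepF s e c st = stepF s e' c st := by
  cases e with
  | nil => cases e' with
      | nil => rfl
      | cons j t' => simp at h
  | cons i t => cases e' with
      | nil => simp at h
      | cons j t' => simp at h; rw [stepF, stepF, h]


/-! ### List lemmas -/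

lemma filter_comm' (p q : Impression → Bool) (l : List Impression) :
    (l.filter p).filter q = (l.filter q).filter p := by
  rw [List.filter_filter, List.filter_filter]
  exact List.filter_congr fun a _ => Bool.and_comm _ _

lemma head?_filter_time {l : List Impression} (hl : l.Pairwise fun i j => i.time ≤ j.time)
    (T : ℕ) :
    (l.filter fun i => decide (i.time < T)).head? =
      match l.head? with
      | none => none
      | some i => if i.time < T then some i else none := by
  cases l with
  | nil => rfl
  | cons i t =>
      rw [List.pairwise_cons] at hl
      by_cases h : i.time < T
      · simp [List.filter_cons, h]
      · have hnil : (i :: t).filter (fun i => decide (i.time < T)) = [] := by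
          rw [List.filter_eq_nil_iff]
          intro j hj
          rcases List.mem_cons.mp hj with rfl | hj'
          · simp [h]
          · have := hl.1 j hj'
            simp only [decide_eq_true_eq]
            omega
        simp [hnil, h]

/-! ### Eligibility lemmas -/

abbrev sc : Impression → ℕ × ℕ × ℕ := fun i => (i.user, i.pub, i.adv)

lemma elig_sub {D D' : Dataset} {v : ℕ × ℕ × ℕ}
    (hImps : D.imps = D'.imps.filter fun i => decide (sc i ≠ v)) (c : Conversion) :
    eligible D c = (eligible D' c).filter fun i => decide (sc i ≠ v) := by
  unfold eligible
  rw [hImps]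
  exact filter_comm' _ _ _

lemma mem_elig {D : Dataset} {c : Conversion} {i : Impression} (h : i ∈ eligible D c) :
    i.time < c.time ∧ i.user = c.user ∧ i.adv = c.adv := by
  have := List.mem_filter.mp h
  exact of_decide_eq_true this.2

lemma elig_ua {D' : Dataset} {v : ℕ × ℕ × ℕ} {c : Conversion}
    (hcu : c.user = v.1) (hca : c.adv = v.2.2) :
    eligible D' c =
      (D'.imps.filter fun i => decide (i.user = v.1 ∧ i.adv = v.2.2)).filter
        fun i => decide (i.time < c.time) := by
  unfold eligible
  rw [List.filter_filter]
  refine List.filter_congr fun i _ => ?_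
  by_cases h1 : i.time < c.time <;> by_cases h2 : i.user = v.1 <;> by_cases h3 : i.adv = v.2.2 <;>
    simp [h1, h2, h3, hcu, hca]

lemma elig_not_ua {D D' : Dataset} {v : ℕ × ℕ × ℕ}
    (hImps : D.imps = D'.imps.filter fun i => decide (sc i ≠ v)) {c : Conversion}
    (hc : ¬(c.user = v.1 ∧ c.adv = v.2.2)) :
    eligible D c = eligible D' c ∧ ∀ i ∈ eligible D' c, sc i ≠ v := by
  have hdis : ∀ i ∈ eligible D' c, sc i ≠ v := by
    intro i hi hiv
    obtain ⟨-, hiu, hia⟩ := mem_elig hi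
    apply hc
    have h1 : i.user = v.1 := congrArg Prod.fst hiv
    have h2 : i.adv = v.2.2 := congrArg (fun x => x.2.2) hiv
    exact ⟨hiu ▸ h1, hia ▸ h2⟩
  refine ⟨?_, hdis⟩
  rw [elig_sub hImps c]
  rw [List.filter_eq_self]
  intro i hi
  simpa using hdis i hi


/-! ### State invariant machinery -/

abbrev St : Type := ((ℕ × ℕ × ℕ) → ℝ) × ((Impression × Conversion) →₀ ℝ)

lemma stepF_scope (w : ℕ × ℕ × ℕ) (e : List Impression) (c : Conversion) (st : St)
    (he : e.head? = none ∨ ∃ i, e.head? = some i ∧ sc i = w) :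
    (∀ x, x ≠ w → (stepF sc e c st).1 x = st.1 x) ∧
    ((∀ x, 0 ≤ st.1 x) → ∀ x, 0 ≤ (stepF sc e c st).1 x) ∧
    ∃ X, (stepF sc e c st).2 = st.2 + X ∧ N X ≤ st.1 w - (stepF sc e c st).1 w ∧
      0 ≤ st.1 w - (stepF sc e c st).1 w := by
  cases e with
  | nil => exact ⟨fun x _ => rfl, fun h => h, 0, by simp [stepF], by simp [stepF, N_zero], by simp [stepF]⟩
  | cons i t =>
      rcases he with h | ⟨j, hj, hw⟩
      · simp at h
      · have hji : i = j := by simpa using hj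
        subst hji
        rw [stepF]
        split_ifs with hb
        all_goals try dsimp only
        · rw [hw] at hb ⊢
          refine ⟨fun x hx => Function.update_of_ne hx _ _, ?_, Finsupp.single (i, c) 1, rfl, ?_, ?_⟩
          · intro h x
            by_cases hx : x = w
            · subst hx
              simp only [Function.update_self]
              linarith
            · rw [Function.update_of_ne hx]
              exact h x
          · simp only [Function.update_self]
            have := N_single (i, c) (1 : ℝ)
            simp only [abs_one] at this
            linarith
          · simp only [Function.update_self]
            linarith
        · exact ⟨fun x _ => rfl, fun h => h, 0, by simp, by simp [N_zero], by simp⟩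

def Fact (D D' : Dataset) (v τ : ℕ × ℕ × ℕ) (c : Conversion) : Prop :=
  (eligible D c = eligible D' c ∧ ∀ i ∈ eligible D' c, sc i ≠ v ∧ sc i ≠ τ) ∨
  (((eligible D' c).head? = none ∨ ∃ i, (eligible D' c).head? = some i ∧ sc i = v) ∧
   ((eligible D c).head? = none ∨ ∃ i, (eligible D c).head? = some i ∧ sc i = τ))

lemma step_pres {D D' : Dataset} {v τ : ℕ × ℕ × ℕ} {r : ℝ} {c : Conversion}
    (hc : Fact D D' v τ c) (st st' : St)
    (H1 : ∀ x, x ≠ v → x ≠ τ → st.1 x = st'.1 x)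
    (H2 : ∀ x, 0 ≤ st.1 x) (H2' : ∀ x, 0 ≤ st'.1 x)
    (H3 : N (st.2 - st'.2) ≤ (r - st.1 τ) + (r - st'.1 v)) :
    (∀ x, x ≠ v → x ≠ τ →
      (stepF sc (eligible D c) c st).1 x = (stepF sc (eligible D' c) c st').1 x) ∧
    (∀ x, 0 ≤ (stepF sc (eligible D c) c st).1 x) ∧
    (∀ x, 0 ≤ (stepF sc (eligible D' c) c st').1 x) ∧
    N ((stepF sc (eligible D c) c st).2 - (stepF sc (eligible D' c) c st').2) ≤
      (r - (stepF sc (eligible D c) c st).1 τ) + (r - (stepF sc (eligible D' c) c st').1 v) := by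
  rcases hc with ⟨heq, hsc⟩ | ⟨hE', hE⟩
  · rw [heq]
    cases hel : eligible D' c with
    | nil => exact ⟨H1, H2, H2', H3⟩
    | cons i t =>
        have hi : i ∈ eligible D' c := by rw [hel]; exact List.mem_cons_self
        obtain ⟨hsv, hst⟩ := hsc i hi
        have hbeq : st.1 (sc i) = st'.1 (sc i) := H1 _ hsv hst
        by_cases hb : 1 ≤ st'.1 (sc i)
        · rw [stepF, stepF, if_pos (hbeq ▸ hb), if_pos hb]
          dsimp only
          refine ⟨?_, ?_, ?_, ?_⟩
          · intro x hxv hxτ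
            by_cases hxs : x = sc i
            · subst hxs
              simp only [Function.update_self, hbeq]
            · rw [Function.update_of_ne hxs, Function.update_of_ne hxs]
              exact H1 x hxv hxτ
          · intro x
            by_cases hxs : x = sc i
            · subst hxs; simp only [Function.update_self]; linarith [hbeq ▸ hb]
            · rw [Function.update_of_ne hxs]; exact H2 x
          · intro x
            by_cases hxs : x = sc i
            · subst hxs; simp only [Function.update_self]; linarith
            · rw [Function.update_of_ne hxs]; exact H2' x
          · have h1 : Function.update st.1 (sc i) (st.1 (sc i) - 1) τ = st.1 τ :=
              Function.update_of_ne (fun h => hst h.symm) _ _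
            have h2 : Function.update st'.1 (sc i) (st'.1 (sc i) - 1) v = st'.1 v :=
              Function.update_of_ne (fun h => hsv h.symm) _ _
            rw [add_sub_add_right_eq_sub, h1, h2]
            exact H3
        · rw [stepF, stepF, if_neg (fun h => hb (hbeq ▸ h)), if_neg hb]
          exact ⟨H1, H2, H2', H3⟩
  · obtain ⟨hA1, hA2, X, hXe, hXb, hXn⟩ := stepF_scope τ (eligible D c) c st hE
    obtain ⟨hB1, hB2, Y, hYe, hYb, hYn⟩ := stepF_scope v (eligible D' c) c st' hE'
    refine ⟨?_, hA2 H2, hB2 H2', ?_⟩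
    · intro x hxv hxτ
      rw [hA1 x hxτ, hB1 x hxv]
      exact H1 x hxv hxτ
    · rw [hXe, hYe]
      have hkey := N_key st.2 st'.2 X Y
      linarith

lemma fold_pres {D D' : Dataset} {v τ : ℕ × ℕ × ℕ} {r : ℝ} :
    ∀ (cs : List Conversion) (st st' : St),
    (∀ c ∈ cs, Fact D D' v τ c) →
    (∀ x, x ≠ v → x ≠ τ → st.1 x = st'.1 x) →
    (∀ x, 0 ≤ st.1 x) → (∀ x, 0 ≤ st'.1 x) →
    N (st.2 - st'.2) ≤ (r - st.1 τ) + (r - st'.1 v) →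
    (∀ x, 0 ≤ (cs.foldl (fun st c => stepF sc (eligible D c) c st) st).1 x) ∧
    (∀ x, 0 ≤ (cs.foldl (fun st c => stepF sc (eligible D' c) c st) st').1 x) ∧
    N ((cs.foldl (fun st c => stepF sc (eligible D c) c st) st).2 -
        (cs.foldl (fun st c => stepF sc (eligible D' c) c st) st').2) ≤
      (r - (cs.foldl (fun st c => stepF sc (eligible D c) c st) st).1 τ) +
      (r - (cs.foldl (fun st c => stepF sc (eligible D' c) c st) st').1 v) := by
  intro cs
  induction cs with
  | nil => intro st st' _ H1 H2 H2' H3; exact ⟨H2, H2', H3⟩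
  | cons c cs ih =>
      intro st st' hF H1 H2 H2' H3
      obtain ⟨G1, G2, G3, G4⟩ :=
        step_pres (hF c (List.mem_cons_self)) st st' H1 H2 H2' H3
      exact ih _ _ (fun c' hc' => hF c' (List.mem_cons_of_mem _ hc')) G1 G2 G3 G4

lemma fold_congr {D D' : Dataset} :
    ∀ (cs : List Conversion) (st : St),
    (∀ c ∈ cs, (eligible D c).head? = (eligible D' c).head?) →
    cs.foldl (fun st c => stepF sc (eligible D c) c st) st =
      cs.foldl (fun st c => stepF sc (eligible D' c) c st) st := by
  intro cs
  induction cs with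
  | nil => intro st _; rfl
  | cons c cs ih =>
      intro st h
      simp only [List.foldl_cons]
      rw [stepF_congr sc c st (h c (List.mem_cons_self))]
      exact ih _ (fun c' hc' => h c' (List.mem_cons_of_mem _ hc'))


/-! ### Main assembly lemmas -/

lemma l1dist_eq (w w' : (Impression × Conversion) →₀ ℝ) : l1dist w w' = N (w - w') := rfl

lemma main_A {D D' : Dataset} (r : ℕ)
    (hconvs : D.convs = D'.convs)
    (hhead : ∀ c, (eligible D c).head? = (eligible D' c).head?) :
    l1dist (postAttr FTA sc (r : ℝ) D) (postAttr FTA sc (r : ℝ) D') ≤ 2 * (r : ℝ) := by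
  rw [l1dist_eq, postAttr_FTA, postAttr_FTA, hconvs,
    fold_congr (D := D) (D' := D') D'.convs _ (fun c _ => hhead c), sub_self, N_zero]
  positivity

lemma main_B {D D' : Dataset} (v τ : ℕ × ℕ × ℕ) (r : ℕ)
    (hconvs : D.convs = D'.convs)
    (hFact : ∀ c, Fact D D' v τ c) :
    l1dist (postAttr FTA sc (r : ℝ) D) (postAttr FTA sc (r : ℝ) D') ≤ 2 * (r : ℝ) := by
  rw [l1dist_eq, postAttr_FTA, postAttr_FTA, hconvs]
  obtain ⟨h1, h2, h3⟩ := fold_pres (r := (r : ℝ)) D'.convs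
    ((fun _ => (r : ℝ)), 0) ((fun _ => (r : ℝ)), 0) (fun c _ => hFact c)
    (fun _ _ _ => rfl) (fun _ => Nat.cast_nonneg r) (fun _ => Nat.cast_nonneg r)
    (by rw [sub_self, N_zero]; simp)
  have hτ := h1 τ
  have hv := h2 v
  linarith

end ThmA10

open ThmA10 in
/-- Theorem A.10: for first-touch attribution, the user × publisher × advertiser adjacency
relation with post-attribution contribution bound enforcement (bound `r`) yields attributed
datasets at ℓ₁-distance at most `2r`. -/
theorem post_attr_upa_fta_valid (r : ℕ) (hr : 0 < r) (v : ℕ × ℕ × ℕ)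
    (D D' : Dataset) (hD' : SortedDS D')
    (hadj : RemovesScope (fun i => (i.user, i.pub, i.adv)) (fun _ => none) v D D') :
    l1dist (postAttr FTA (fun i => (i.user, i.pub, i.adv)) (r : ℝ) D)
      (postAttr FTA (fun i => (i.user, i.pub, i.adv)) (r : ℝ) D') ≤ 2 * (r : ℝ) := by
  classical
  obtain ⟨hImps, hConvs⟩ := hadj
  have hImps' : D.imps = D'.imps.filter fun i => decide (sc i ≠ v) := hImps
  have hconvs : D.convs = D'.convs := by
    rw [hConvs]
    apply List.filter_eq_self.mpr
    intro c _
    simp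
  set M' := D'.imps.filter fun i => decide (i.user = v.1 ∧ i.adv = v.2.2) with hM'def
  set M := M'.filter fun i => decide (sc i ≠ v) with hMdef
  have hsM' : M'.Pairwise fun i j => i.time ≤ j.time := List.Pairwise.filter _ hD'.1
  have hsM : M.Pairwise fun i j => i.time ≤ j.time := List.Pairwise.filter _ hsM'
  have hE'ua : ∀ c : Conversion, c.user = v.1 → c.adv = v.2.2 →
      (eligible D' c).head? = (match M'.head? with
        | none => none
        | some i => if i.time < c.time then some i else none) := by
    intro c h1 h2
    rw [elig_ua h1 h2, ← hM'def]
    exact head?_filter_time hsM' c.time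
  have hEua : ∀ c : Conversion, c.user = v.1 → c.adv = v.2.2 →
      (eligible D c).head? = (match M.head? with
        | none => none
        | some i => if i.time < c.time then some i else none) := by
    intro c h1 h2
    have heq : eligible D c = M.filter fun i => decide (i.time < c.time) := by
      rw [elig_sub hImps' c, elig_ua h1 h2, ← hM'def, filter_comm', ← hMdef]
    rw [heq]
    exact head?_filter_time hsM c.time
  cases hM'h : M'.head? with
  | none =>
      have hM'nil : M' = [] := List.head?_eq_none_iff.mp hM'h
      apply main_A r hconvs
      intro c
      by_cases hc : c.user = v.1 ∧ c.adv = v.2.2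
      · have hMnil : M = [] := by rw [hMdef, hM'nil]; rfl
        rw [hE'ua c hc.1 hc.2, hEua c hc.1 hc.2, hM'h, hMnil]
        rfl
      · rw [(elig_not_ua hImps' hc).1]
  | some j1 =>
      by_cases hj1v : sc j1 = v
      · -- Case B: the earliest (u,a)-impression in D' has the removed scope.
        cases hMh : M.head? with
        | none =>
            apply main_B v v r hconvs
            intro c
            by_cases hc : c.user = v.1 ∧ c.adv = v.2.2
            · right
              constructor
              · rw [hE'ua c hc.1 hc.2, hM'h]
                by_cases ht : j1.time < c.time
                · exact Or.inr ⟨j1, by simp [ht], hj1v⟩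
                · exact Or.inl (by simp [ht])
              · left
                rw [hEua c hc.1 hc.2, hMh]
            · left
              obtain ⟨heq, hne⟩ := elig_not_ua hImps' hc
              exact ⟨heq, fun i hi => ⟨hne i hi, hne i hi⟩⟩
        | some j2 =>
            apply main_B v (sc j2) r hconvs
            have hj2M : j2 ∈ M := List.mem_of_mem_head? (by rw [hMh]; rfl)
            have hj2M' : j2 ∈ M' := List.mem_of_mem_filter hj2M
            have hj2ua : j2.user = v.1 ∧ j2.adv = v.2.2 :=
              of_decide_eq_true (List.mem_filter.mp hj2M').2
            intro c
            by_cases hc : c.user = v.1 ∧ c.adv = v.2.2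
            · right
              constructor
              · rw [hE'ua c hc.1 hc.2, hM'h]
                by_cases ht : j1.time < c.time
                · exact Or.inr ⟨j1, by simp [ht], hj1v⟩
                · exact Or.inl (by simp [ht])
              · rw [hEua c hc.1 hc.2, hMh]
                by_cases ht : j2.time < c.time
                · exact Or.inr ⟨j2, by simp [ht], rfl⟩
                · exact Or.inl (by simp [ht])
            · left
              obtain ⟨heq, hne⟩ := elig_not_ua hImps' hc
              refine ⟨heq, fun i hi => ⟨hne i hi, ?_⟩⟩
              intro hiτ
              obtain ⟨-, hiu, hia⟩ := mem_elig hi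
              apply hc
              have h1 : i.user = j2.user := congrArg Prod.fst hiτ
              have h2 : i.adv = j2.adv := congrArg (fun x : ℕ × ℕ × ℕ => x.2.2) hiτ
              exact ⟨hiu ▸ (h1.trans hj2ua.1), hia ▸ (h2.trans hj2ua.2)⟩
      · -- Case A: the earliest (u,a)-impression survives in D.
        apply main_A r hconvs
        intro c
        by_cases hc : c.user = v.1 ∧ c.adv = v.2.2
        · have hMh : M.head? = some j1 := by
            obtain ⟨t, ht⟩ := List.head?_eq_some_iff.mp hM'h
            rw [hMdef, ht, List.filter_cons]
            simp [hj1v]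
          rw [hE'ua c hc.1 hc.2, hEua c hc.1 hc.2, hM'h, hMh]
        · rw [(elig_not_ua hImps' hc).1]
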